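/- Let G be a finite solvable group. Then the number of conjugacy classes of nontrivial proper subgroup perfect codes of G is at least 2^{|π(G)|} − 2. -/

import Mathlib

open Pointwise

/-- `H` is a subgroup perfect code of `G`: it admits an inverse-closed right transversal. -/
def IsPerfectCode {G : Type*} [Group G] (H : Subgroup G) : Prop :=
  ∃ T : Set G, Subgroup.IsComplement (H : Set G) T ∧ T⁻¹ = T

/-- The nontrivial proper subgroup perfect codes of `G`. -/
def NontrivialProperPerfectCode (G : Type*) [Group G] : Type _ :=
  {H : Subgroup G // H ≠ ⊥ ∧ H ≠ ⊤ ∧ IsPerfectCode H}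

/-- Conjugacy classes of nontrivial proper subgroup perfect codes of `G`. -/
def PerfectCodeConjClasses (G : Type*) [Group G] : Type _ :=
  Quot (fun H K : NontrivialProperPerfectCode G => ∃ g : G, MulAut.conj g • H.1 = K.1)

section Aux

universe u

open Subgroup

/-- A nontrivial finite solvable group has a nontrivial normal `p`-subgroup. -/
lemma aux_exists_normal_pgroup (G : Type u) [Group G] [Finite G] [Nontrivial G]
    (hsol : IsSolvable G) :
    ∃ (p : ℕ) (N : Subgroup G), p.Prime ∧ N.Normal ∧ N ≠ ⊥ ∧ IsPGroup p N := by
  classical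
  obtain ⟨n0, hn0⟩ := hsol.solvable
  have hex : ∃ n, derivedSeries G n = ⊥ := ⟨n0, hn0⟩
  have hmbot : derivedSeries G (Nat.find hex) = ⊥ := Nat.find_spec hex
  have hm0 : Nat.find hex ≠ 0 := by
    intro h
    rw [h, derivedSeries_zero] at hmbot
    obtain ⟨x, hx⟩ := exists_ne (1 : G)
    exact hx (Subgroup.mem_bot.mp (hmbot ▸ Subgroup.mem_top x))
  set A : Subgroup G := derivedSeries G (Nat.find hex - 1) with hAdef
  have hA : A ≠ ⊥ := Nat.find_min hex (by omega)
  have hcommbot : ⁅A, A⁆ = ⊥ := by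
    have := derivedSeries_succ G (Nat.find hex - 1)
    rw [show Nat.find hex - 1 + 1 = Nat.find hex by omega, hmbot] at this
    exact this.symm
  have hcent : A ≤ Subgroup.centralizer (A : Set G) :=
    Subgroup.commutator_eq_bot_iff_le_centralizer.mp hcommbot
  have hcomm : ∀ a b : G, a ∈ A → b ∈ A → b * a = a * b := fun a b ha hb =>
    (Subgroup.mem_centralizer_iff.mp (hcent ha)) b hb
  haveI hAnormal : A.Normal := derivedSeries_normal G _
  -- find a prime dividing the order of A
  have hAcard : Nat.card A ≠ 1 := by
    intro h
    exact hA (Subgroup.eq_bot_of_card_eq A h)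
  obtain ⟨p, hp, hpdvd⟩ := Nat.exists_prime_and_dvd hAcard
  haveI : Fact p.Prime := ⟨hp⟩
  obtain ⟨a0, ha0⟩ := exists_prime_orderOf_dvd_card' (G := A) p hpdvd
  refine ⟨p, {
      carrier := {x : G | x ∈ A ∧ ∃ k : ℕ, x ^ p ^ k = 1}
      one_mem' := ⟨A.one_mem, 0, one_pow _⟩
      mul_mem' := ?_
      inv_mem' := ?_ }, hp, ?_, ?_, ?_⟩
  · rintro a b ⟨haA, k, hk⟩ ⟨hbA, l, hl⟩
    refine ⟨A.mul_mem haA hbA, k + l, ?_⟩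
    have hC : Commute a b := (hcomm a b haA hbA).symm
    rw [hC.mul_pow, pow_add, pow_mul, hk, one_pow, one_mul, mul_comm (p ^ k),
      pow_mul, hl, one_pow]
  · rintro a ⟨haA, k, hk⟩
    exact ⟨A.inv_mem haA, k, by rw [inv_pow, hk, inv_one]⟩
  · constructor
    rintro x ⟨hxA, k, hk⟩ g
    refine ⟨hAnormal.conj_mem x hxA g, k, ?_⟩
    rw [conj_pow, hk, mul_one, mul_inv_cancel]
  · -- nontrivial: contains the coercion of a0
    intro hbot
    have hmem : (a0 : G) ∈ ({x : G | x ∈ A ∧ ∃ k : ℕ, x ^ p ^ k = 1} : Set G) := by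
      refine ⟨a0.2, 1, ?_⟩
      have : (a0 : G) ^ p = 1 := by
        have := pow_orderOf_eq_one a0
        rw [ha0] at this
        exact_mod_cast congrArg (Subtype.val) this
      rw [pow_one]; exact this
    have : (a0 : G) = 1 := by
      have hb1 : (a0 : G) ∈ (⊥ : Subgroup G) := by
        rw [← hbot]; exact hmem
      exact Subgroup.mem_bot.mp hb1
    have : orderOf (a0 : G) = 1 := by rw [this, orderOf_one]
    rw [orderOf_coe, ha0] at this
    exact hp.one_lt.ne' this
  · rintro ⟨x, hxA, k, hk⟩
    exact ⟨k, Subtype.ext (by push_cast; exact hk)⟩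

/-- P. Hall's theorem (existence), phased via factorizations. -/
lemma aux_hall (n : ℕ) :
    ∀ (G : Type u) [Group G] [Finite G], Nat.card G = n → IsSolvable G →
      ∀ π : Finset ℕ, ∃ H : Subgroup G,
        (∀ q, q ∉ π → (Nat.card H).factorization q = 0) ∧
        (∀ q, q ∈ π → H.index.factorization q = 0) := by
  induction n using Nat.strong_induction_on with
  | _ n ih =>
  intro G _ _ hn hsol π
  rcases subsingleton_or_nontrivial G with hG | hG
  · refine ⟨⊥, ?_, ?_⟩
    · intro q _; rw [Subgroup.card_bot]; simp
    · intro q _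
      have h1 : Nat.card G = 1 := Nat.card_eq_one_iff_unique.mpr ⟨hG, inferInstance⟩
      rw [Subgroup.index_bot, h1]; simp
  · obtain ⟨p, N, hp, hNnormal, hNbot, hNp⟩ := aux_exists_normal_pgroup G hsol
    haveI := hNnormal
    haveI : Fact p.Prime := ⟨hp⟩
    obtain ⟨a, haN⟩ := hNp.exists_card_eq
    have hNcard1 : 1 < Nat.card N := (Subgroup.one_lt_card_iff_ne_bot N).mpr hNbot
    have hQG : Nat.card G = Nat.card (G ⧸ N) * Nat.card N :=
      Subgroup.card_eq_card_quotient_mul_card_subgroup N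
    have hQpos : 0 < Nat.card (G ⧸ N) := Nat.card_pos
    have hQlt : Nat.card (G ⧸ N) < n := by
      rw [← hn, hQG]; nlinarith
    obtain ⟨Kb, hKb1, hKb2⟩ := ih (Nat.card (G ⧸ N)) hQlt (G ⧸ N) rfl (by haveI : Group.IsSolvable G := hsol; exact (inferInstance : Group.IsSolvable (G ⧸ N))) π
    set φ := QuotientGroup.mk' N with hφ
    set H₀ : Subgroup G := Kb.comap φ with hH₀
    have hidx : H₀.index = Kb.index :=
      Kb.index_comap_of_surjective (QuotientGroup.mk'_surjective N)
    have hKbind : Kb.index ≠ 0 := Subgroup.index_ne_zero_of_finite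
    have hKbcard : Nat.card Kb ≠ 0 := Nat.card_pos.ne'
    have hNcard : Nat.card N ≠ 0 := Nat.card_pos.ne'
    have hcardH₀ : Nat.card H₀ = Nat.card Kb * Nat.card N := by
      have e1 : Nat.card H₀ * H₀.index = Nat.card G := Subgroup.card_mul_index H₀
      rw [hidx] at e1
      have e2 : Nat.card Kb * Kb.index = Nat.card (G ⧸ N) := Subgroup.card_mul_index Kb
      have e3 : Nat.card H₀ * Kb.index = (Nat.card Kb * Nat.card N) * Kb.index := by
        rw [e1, hQG, ← e2]; ring
      exact Nat.eq_of_mul_eq_mul_right (Nat.pos_of_ne_zero hKbind) e3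
    by_cases hpπ : p ∈ π
    · refine ⟨H₀, ?_, ?_⟩
      · intro q hq
        rw [hcardH₀, Nat.factorization_mul hKbcard hNcard, Finsupp.add_apply,
          hKb1 q hq, haN, hp.factorization_pow, Finsupp.single_apply,
          if_neg (by rintro rfl; exact hq hpπ)]
        rfl
      · intro q hq
        rw [hidx]; exact hKb2 q hq
    · -- p ∉ π : apply Schur–Zassenhaus inside H₀
      have hNle : N ≤ H₀ := by
        intro x hx
        have : φ x = 1 := (QuotientGroup.eq_one_iff x).mpr hx
        simpa [hH₀, Subgroup.mem_comap, this] using Kb.one_mem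
      set N' : Subgroup H₀ := N.subgroupOf H₀ with hN'
      haveI : N'.Normal := Subgroup.normal_subgroupOf
      have hN'card : Nat.card N' = Nat.card N :=
        Nat.card_congr (Subgroup.subgroupOfEquivOfLe hNle).toEquiv
      have hN'index : N'.index = Nat.card Kb := by
        have e1 : Nat.card N' * N'.index = Nat.card H₀ := Subgroup.card_mul_index N'
        rw [hN'card] at e1
        have e2 : Nat.card N * N'.index = Nat.card N * Nat.card Kb := by
          rw [e1, hcardH₀]; ring
        exact Nat.eq_of_mul_eq_mul_left (Nat.pos_of_ne_zero hNcard) e2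
      have hcop : Nat.Coprime (Nat.card N') N'.index := by
        rw [hN'card, hN'index, haN]
        refine Nat.Coprime.pow_left a (hp.coprime_iff_not_dvd.mpr ?_)
        intro hdvd
        have := hKb1 p hpπ
        rw [Nat.factorization_eq_zero_iff] at this
        rcases this with h | h | h
        · exact h hp
        · exact h hdvd
        · exact hKbcard h
      obtain ⟨K', hK'⟩ := Subgroup.exists_right_complement'_of_coprime hcop
      have hK'card : Nat.card K' = Nat.card Kb := by
        have e1 : Nat.card N' * Nat.card K' = Nat.card H₀ := hK'.card_mul
        rw [hN'card] at e1
        have e2 : Nat.card N * Nat.card K' = Nat.card N * Nat.card Kb := by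
          rw [e1, hcardH₀]; ring
        exact Nat.eq_of_mul_eq_mul_left (Nat.pos_of_ne_zero hNcard) e2
      refine ⟨K'.map H₀.subtype, ?_, ?_⟩
      · intro q hq
        have hc : Nat.card (K'.map H₀.subtype) = Nat.card Kb := by
          rw [← hK'card]
          exact (Nat.card_congr
            (K'.equivMapOfInjective H₀.subtype (Subgroup.subtype_injective H₀)).toEquiv).symm
        rw [hc]; exact hKb1 q hq
      · intro q hq
        have hc : Nat.card (K'.map H₀.subtype) = Nat.card Kb := by
          rw [← hK'card]
          exact (Nat.card_congr
            (K'.equivMapOfInjective H₀.subtype (Subgroup.subtype_injective H₀)).toEquiv).symm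
        have e1 : Nat.card (K'.map H₀.subtype) * (K'.map H₀.subtype).index = Nat.card G :=
          Subgroup.card_mul_index _
        have hidxK : (K'.map H₀.subtype).index = Kb.index * Nat.card N := by
          rw [hc] at e1
          have e2 : Nat.card Kb * (K'.map H₀.subtype).index
              = Nat.card Kb * (Kb.index * Nat.card N) := by
            rw [e1, hQG, ← Subgroup.card_mul_index Kb]; ring
          exact Nat.eq_of_mul_eq_mul_left (Nat.pos_of_ne_zero hKbcard) e2
        rw [hidxK, Nat.factorization_mul hKbind hNcard, Finsupp.add_apply,
          hKb2 q hq, haN, hp.factorization_pow, Finsupp.single_apply,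
          if_neg (by rintro rfl; exact hpπ hq)]
        rfl

/-- For each nonempty proper subset of the primes of `|G|` there is a nontrivial proper
perfect code whose order has exactly those prime factors. -/
lemma aux_packaged (G : Type u) [Group G] [Finite G] (hsol : IsSolvable G)
    (π : Finset ℕ) (hsub : π ⊆ (Nat.card G).primeFactors)
    (hne : π ≠ ∅) (hnetop : π ≠ (Nat.card G).primeFactors) :
    ∃ H : Subgroup G, (H ≠ ⊥ ∧ H ≠ ⊤ ∧ IsPerfectCode H) ∧
      (Nat.card H).primeFactors = π := by
  classical
  set PP := (Nat.card G).primeFactors with hPP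
  have hGcard : Nat.card G ≠ 0 := Nat.card_pos.ne'
  obtain ⟨H, hH1, hH2⟩ := aux_hall (Nat.card G) G rfl hsol π
  obtain ⟨K, hK1, hK2⟩ := aux_hall (Nat.card G) G rfl hsol (PP \ π)
  have hHcard : Nat.card H ≠ 0 := Nat.card_pos.ne'
  have hKcard : Nat.card K ≠ 0 := Nat.card_pos.ne'
  have hHidx : H.index ≠ 0 := Subgroup.index_ne_zero_of_finite
  have hKidx : K.index ≠ 0 := Subgroup.index_ne_zero_of_finite
  have eH : ∀ q, (Nat.card H).factorization q + H.index.factorization q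
      = (Nat.card G).factorization q := by
    intro q
    rw [← Subgroup.card_mul_index H, Nat.factorization_mul hHcard hHidx, Finsupp.add_apply]
  have eK : ∀ q, (Nat.card K).factorization q + K.index.factorization q
      = (Nat.card G).factorization q := by
    intro q
    rw [← Subgroup.card_mul_index K, Nat.factorization_mul hKcard hKidx, Finsupp.add_apply]
  have hsupport : ∀ q, q ∈ PP ↔ (Nat.card G).factorization q ≠ 0 := by
    intro q
    rw [hPP, ← Nat.support_factorization, Finsupp.mem_support_iff]
  -- prime factors of |H| are exactly π
  have hprimeH : (Nat.card H).primeFactors = π := by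
    ext q
    rw [← Nat.support_factorization, Finsupp.mem_support_iff]
    constructor
    · intro h
      by_contra hq
      exact h (hH1 q hq)
    · intro hq
      have h1 : H.index.factorization q = 0 := hH2 q hq
      have h2 := eH q
      rw [h1, add_zero] at h2
      rw [h2]
      exact (hsupport q).mp (hsub hq)
  -- |K| = [G : H]
  have hKH : Nat.card K = H.index := by
    apply Nat.factorization_inj hKcard hHidx
    ext q
    by_cases hq : q ∈ π
    · rw [hH2 q hq, hK1 q (by simp [hq])]
    · by_cases hqPP : q ∈ PP
      · have h1 : K.index.factorization q = 0 := hK2 q (Finset.mem_sdiff.mpr ⟨hqPP, hq⟩)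
        have h2 : (Nat.card H).factorization q = 0 := hH1 q hq
        have e1 := eK q; have e2 := eH q
        rw [h1, add_zero] at e1
        rw [h2, zero_add] at e2
        rw [e1, e2]
      · have h0 : (Nat.card G).factorization q = 0 := by
          by_contra h
          exact hqPP ((hsupport q).mpr h)
        have e1 := eK q; have e2 := eH q
        rw [h0] at e1 e2
        omega
  have hmul : Nat.card H * Nat.card K = Nat.card G := by
    rw [hKH]; exact Subgroup.card_mul_index H
  have hcop : Nat.Coprime (Nat.card H) (Nat.card K) := by
    rw [← Nat.disjoint_primeFactors hHcard hKcard, hprimeH]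
    refine Finset.disjoint_left.mpr ?_
    intro q hq hqK
    have := hK1 q
    rw [← Nat.support_factorization, Finsupp.mem_support_iff] at hqK
    by_cases h : q ∈ PP \ π
    · exact (Finset.mem_sdiff.mp h).2 hq
    · exact hqK (hK1 q h)
  have hcomp : Subgroup.IsComplement' H K := Subgroup.isComplement'_of_coprime hmul hcop
  refine ⟨H, ⟨?_, ?_, ?_⟩, hprimeH⟩
  · intro h
    rw [h, Subgroup.card_bot] at hprimeH
    simp only [Nat.primeFactors_one] at hprimeH
    exact hne hprimeH.symm
  · intro h
    obtain ⟨q, hqPP, hqπ⟩ : ∃ q, q ∈ PP ∧ q ∉ π := by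
      by_contra hcon
      push_neg at hcon
      exact hnetop (Finset.Subset.antisymm hsub hcon)
    have h2 : (Nat.card H).factorization q = 0 := hH1 q hqπ
    have e2 := eH q
    rw [h2, zero_add] at e2
    have : H.index = 1 := by rw [h]; exact Subgroup.index_top
    rw [this] at e2
    simp only [Nat.factorization_one, Finsupp.coe_zero, Pi.zero_apply] at e2
    exact (hsupport q).mp hqPP e2.symm
  · refine ⟨(K : Set G), hcomp, ?_⟩
    ext x
    simp [Set.mem_inv]

end Aux

theorem stmt_15 {G : Type*} [Group G] [Fintype G] (hsol : IsSolvable G) :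
    2 ^ (Nat.card G).primeFactors.card - 2 ≤ Nat.card (PerfectCodeConjClasses G) := by
  classical
  set PP := (Nat.card G).primeFactors with hPP
  set S : Finset (Finset ℕ) := PP.powerset \ {∅, PP} with hS
  -- counting: |S| ≥ 2^|PP| - 2
  have hcount : 2 ^ PP.card - 2 ≤ S.card := by
    have h1 : PP.powerset.card - ({∅, PP} : Finset (Finset ℕ)).card ≤ S.card :=
      Finset.le_card_sdiff _ _
    have h2 : ({∅, PP} : Finset (Finset ℕ)).card ≤ 2 := by
      refine le_trans (Finset.card_insert_le _ _) ?_
      simp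
    have h3 : PP.powerset.card = 2 ^ PP.card := Finset.card_powerset PP
    omega
  -- choose a perfect code for each element of S
  have key : ∀ π : {x // x ∈ S}, ∃ H : Subgroup G,
      (H ≠ ⊥ ∧ H ≠ ⊤ ∧ IsPerfectCode H) ∧ (Nat.card H).primeFactors = π.1 := by
    rintro ⟨π, hπ⟩
    rw [hS, Finset.mem_sdiff, Finset.mem_powerset] at hπ
    obtain ⟨hsub, hnot⟩ := hπ
    simp only [Finset.mem_insert, Finset.mem_singleton, not_or] at hnot
    exact aux_packaged G hsol π hsub hnot.1 hnot.2
  choose Hf hH1 hH2 using key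
  let F : {x // x ∈ S} → NontrivialProperPerfectCode G := fun π =>
    (⟨Hf π, hH1 π⟩ : {H : Subgroup G // H ≠ ⊥ ∧ H ≠ ⊤ ∧ IsPerfectCode H})
  let f : {x // x ∈ S} → PerfectCodeConjClasses G := fun π => Quot.mk _ (F π)
  -- conjugation invariant : prime factors of card
  have hinv : ∀ a b : NontrivialProperPerfectCode G,
      (∃ g : G, MulAut.conj g • a.1 = b.1) →
      (Nat.card a.1).primeFactors = (Nat.card b.1).primeFactors := by
    rintro a b ⟨g, hg⟩
    have hcard : Nat.card b.1 = Nat.card a.1 := by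
      rw [← hg, Subgroup.pointwise_smul_def]
      exact (Nat.card_congr (a.1.equivMapOfInjective _
        (MulAut.conj g).injective).toEquiv).symm
    rw [hcard]
  have hfinj : Function.Injective f := by
    intro a b hab
    have := congrArg (Quot.lift
      (fun H : NontrivialProperPerfectCode G => (Nat.card H.1).primeFactors) hinv) hab
    simp only [f, Quot.lift_mk] at this
    have ha : (Nat.card (F a).1).primeFactors = a.1 := hH2 a
    have hb : (Nat.card (F b).1).primeFactors = b.1 := hH2 b
    exact Subtype.ext (by rw [← ha, ← hb, this])
  haveI : Finite (NontrivialProperPerfectCode G) := by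
    unfold NontrivialProperPerfectCode
    infer_instance
  haveI : Finite (PerfectCodeConjClasses G) := by
    unfold PerfectCodeConjClasses
    exact Finite.of_surjective (Quot.mk _) (fun q => Quot.exists_rep q)
  have hle : Nat.card {x // x ∈ S} ≤ Nat.card (PerfectCodeConjClasses G) :=
    Nat.card_le_card_of_injective f hfinj
  have hcardS : Nat.card {x // x ∈ S} = S.card := by
    rw [Nat.card_eq_fintype_card, Fintype.card_coe]
  omega
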